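/- For Hermitian positive semi-definite matrices A and B in C^{n×n}, A:B = B:A, i.e., A(A+B)^† B = B(A+B)^† A. -/

import Mathlib

open scoped Matrix Matrix.Norms.L2Operator ComplexOrder

/-- `MPInv A B` means `B` is the Moore-Penrose inverse of `A`. -/
def MPInv {n : ℕ} (A B : Matrix (Fin n) (Fin n) ℂ) : Prop :=
  A * B * A = A ∧ B * A * B = B ∧ (A * B).IsHermitian ∧ (B * A).IsHermitian

lemma psd_add_eq_zero {n : ℕ} {X Y : Matrix (Fin n) (Fin n) ℂ}
    (hX : X.PosSemidef) (hY : Y.PosSemidef) (h : X + Y = 0) : X = 0 := by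
  have hx : ∀ x : Fin n → ℂ, X *ᵥ x = 0 := by
    intro x
    refine (hX.dotProduct_mulVec_zero_iff x).mp ?_
    have hs : star x ⬝ᵥ X *ᵥ x + star x ⬝ᵥ Y *ᵥ x = 0 := by
      rw [← dotProduct_add, ← Matrix.add_mulVec, h, Matrix.zero_mulVec,
        dotProduct_zero]
    have h1 := hX.dotProduct_mulVec_nonneg x
    have h2 := hY.dotProduct_mulVec_nonneg x
    have : star x ⬝ᵥ X *ᵥ x ≤ 0 := by
      rw [eq_neg_of_add_eq_zero_left hs]
      exact neg_nonpos.mpr h2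
    exact le_antisymm this h1
  ext i j
  have := congrFun (hx (Pi.single j 1)) i
  simpa [Matrix.mulVec_single] using this

/-- If `P` is Hermitian, `P * (A + B) = 0`, and `A`, `B` are PSD, then `P * A = 0`. -/
lemma mul_eq_zero_of_mul_add {n : ℕ} {P A B : Matrix (Fin n) (Fin n) ℂ}
    (hP : P.IsHermitian) (hA : A.PosSemidef) (hB : B.PosSemidef)
    (h : P * (A + B) = 0) : P * A = 0 := by
  have hPAPH : P * A * Pᴴ + P * B * Pᴴ = 0 := by
    have : P * (A + B) * Pᴴ = 0 := by rw [h, Matrix.zero_mul]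
    rw [mul_add, add_mul] at this
    exact this
  have hX : (P * A * Pᴴ).PosSemidef := by
    exact hA.mul_mul_conjTranspose_same P
  have hY : (P * B * Pᴴ).PosSemidef := by
    exact hB.mul_mul_conjTranspose_same P
  have hzero : P * A * Pᴴ = 0 := psd_add_eq_zero hX hY hPAPH
  -- write A = √A * √A with √A Hermitian
  obtain ⟨sA, hsq, hherm⟩ : ∃ S : Matrix (Fin n) (Fin n) ℂ, S * S = A ∧ S.IsHermitian := by
    open scoped MatrixOrder in
    exact ⟨CFC.sqrt A, CFC.sqrt_mul_sqrt_self A (Matrix.nonneg_iff_posSemidef.mpr hA),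
      (Matrix.nonneg_iff_posSemidef.mp (CFC.sqrt_nonneg A)).isHermitian⟩
  have key : P * sA * (P * sA)ᴴ = 0 := by
    rw [Matrix.conjTranspose_mul, hherm.eq]
    calc P * sA * (sA * Pᴴ) = P * (sA * sA) * Pᴴ := by noncomm_ring
    _ = 0 := by rw [hsq, hzero]
  have hPs : P * sA = 0 := by
    rwa [Matrix.self_mul_conjTranspose_eq_zero] at key
  calc P * A = P * sA * sA := by rw [mul_assoc, hsq]
  _ = 0 := by rw [hPs, Matrix.zero_mul]

/-- The parallel sum is commutative: A:B = B:A. -/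
theorem parallel_sum_comm {n : ℕ} (A B Sd : Matrix (Fin n) (Fin n) ℂ)
    (hA : A.PosSemidef) (hB : B.PosSemidef) (hSd : MPInv (A + B) Sd) :
    A * Sd * B = B * Sd * A := by
  obtain ⟨h1, h2, h3, h4⟩ := hSd
  set S := A + B with hS
  have hSpsd : S.PosSemidef := hA.add hB
  -- Left projection: P = 1 - S * Sd
  have hPherm : (1 - S * Sd).IsHermitian := (Matrix.isHermitian_one).sub h3
  have hPS : (1 - S * Sd) * S = 0 := by
    rw [sub_mul, one_mul, h1, sub_self]
  have hPA : (1 - S * Sd) * A = 0 := mul_eq_zero_of_mul_add hPherm hA hB (by rw [← hS]; exact hPS)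
  -- so S * Sd * A = A
  have hSSdA : S * Sd * A = A := by
    have := hPA
    rw [sub_mul, one_mul, sub_eq_zero] at this
    exact this.symm
  -- Right projection: Q = 1 - Sd * S
  have hQherm : (1 - Sd * S).IsHermitian := (Matrix.isHermitian_one).sub h4
  have hQS : (1 - Sd * S) * S = 0 := by
    have hSQ : S * (1 - Sd * S) = 0 := by
      rw [mul_sub, mul_one, ← mul_assoc, h1, sub_self]
    have := congrArg Matrix.conjTranspose hSQ
    rwa [Matrix.conjTranspose_mul, hQherm.eq, hSpsd.isHermitian.eq,
      Matrix.conjTranspose_zero] at this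
  have hQA : (1 - Sd * S) * A = 0 := mul_eq_zero_of_mul_add hQherm hA hB (by rw [← hS]; exact hQS)
  -- so A * Sd * S = A
  have hASdS : A * Sd * S = A := by
    have := congrArg Matrix.conjTranspose hQA
    rw [Matrix.conjTranspose_mul, hQherm.eq, hA.isHermitian.eq, Matrix.conjTranspose_zero,
      mul_sub, mul_one, ← mul_assoc, sub_eq_zero] at this
    exact this.symm
  -- finish
  have hBeq : B = S - A := by rw [hS]; abel
  calc A * Sd * B = A * Sd * S - A * Sd * A := by rw [hBeq]; noncomm_ring
  _ = A - A * Sd * A := by rw [hASdS]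
  _ = S * Sd * A - A * Sd * A := by rw [hSSdA]
  _ = B * Sd * A := by rw [hS]; noncomm_ring
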